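/- arXiv:0907.0744 — 2 statements merged into one kernel-verified Lean document; each statement's English description precedes it below -/
import Mathlib

section
/- Let Ω ⊂ ℂ be open, ν : Ω → ℝ continuously differentiable with |ν(z)| < 1 for all z ∈ Ω, and set σ = (1−ν)/(1+ν) and α = (∂̄σ)/(2σ), where ∂̄ = (∂ₓ + i∂_y)/2. Let f = u + iv : Ω → ℂ be continuously differentiable with u, v real-valued, and define w := σ^{1/2} u + i σ^{−1/2} v. Then f satisfies the conjugate Beltrami equation ∂̄f = ν · conj(∂f) at a point z ∈ Ω if and only if w satisfies ∂̄w = α · conj(w) at z. Moreover w = (f − ν·conj(f))/√(1−ν²). -/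
/-- Wirtinger derivative ∂ = (∂ₓ − i∂_y)/2. -/
noncomputable def wdz (f : ℂ → ℂ) (z : ℂ) : ℂ :=
  (fderiv ℝ f z 1 - Complex.I * fderiv ℝ f z Complex.I) / 2

/-- Wirtinger derivative ∂̄ = (∂ₓ + i∂_y)/2. -/
noncomputable def wdzbar (f : ℂ → ℂ) (z : ℂ) : ℂ :=
  (fderiv ℝ f z 1 + Complex.I * fderiv ℝ f z Complex.I) / 2

lemma ri_eq (x y x' y' : ℝ) :
    ((x : ℂ) + (y : ℂ) * Complex.I = (x' : ℂ) + (y' : ℂ) * Complex.I) ↔ (x = x' ∧ y = y') := by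
  constructor
  · intro h
    have hre := congrArg Complex.re h
    have him := congrArg Complex.im h
    simp at hre him
    exact ⟨hre, him⟩
  · rintro ⟨rfl, rfl⟩; rfl

lemma mul_conj_form (n x y : ℝ) :
    (n : ℂ) * (starRingEnd ℂ) ((x : ℂ) + (y : ℂ) * Complex.I)
      = ((n * x : ℝ) : ℂ) + ((-(n * y) : ℝ) : ℂ) * Complex.I := by
  apply Complex.ext <;> simp <;> ring

lemma mul_form (A B C D : ℝ) :
    (((A : ℝ) : ℂ) + ((B : ℝ) : ℂ) * Complex.I) *
        (starRingEnd ℂ) (((C : ℝ) : ℂ) + ((D : ℝ) : ℂ) * Complex.I)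
      = ((A * C + B * D : ℝ) : ℂ) + ((B * C - A * D : ℝ) : ℂ) * Complex.I := by
  apply Complex.ext <;> simp <;> ring

lemma alg_iff (n s u v a b c d e g : ℝ)
    (hs : s = (1 - n) / (1 + n)) (h1p : 0 < 1 + n) (h1m : 0 < 1 - n) :
    ((a - d) / 2 = n * ((a + d) / 2) ∧ (c + b) / 2 = -(n * ((c - b) / 2)))
    ↔ ((Real.sqrt s * a + u * (e / (2 * Real.sqrt s))
          - (d / Real.sqrt s - v * (g / (2 * Real.sqrt s ^ 3)))) / 2
        = e / (4 * s) * (Real.sqrt s * u) + g / (4 * s) * ((Real.sqrt s)⁻¹ * v)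
      ∧ ((c / Real.sqrt s - v * (e / (2 * Real.sqrt s ^ 3)))
          + (Real.sqrt s * b + u * (g / (2 * Real.sqrt s)))) / 2
        = g / (4 * s) * (Real.sqrt s * u) - e / (4 * s) * ((Real.sqrt s)⁻¹ * v)) := by
  have hspos : 0 < s := by rw [hs]; exact div_pos h1m h1p
  set r := Real.sqrt s with hrdef
  have hrpos : 0 < r := Real.sqrt_pos.mpr hspos
  have hr2 : r ^ 2 = s := Real.sq_sqrt hspos.le
  constructor
  · rintro ⟨h1, h2⟩
    have hd : d = s * a := by
      rw [hs]; field_simp; nlinarith [h1]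
    have hc : c = -(s * b) := by
      rw [hs]; field_simp; nlinarith [h2]
    constructor
    · rw [hd, ← hr2]; field_simp; ring
    · rw [hc, ← hr2]; field_simp; ring
  · rintro ⟨h1, h2⟩
    rw [← hr2] at h1 h2
    field_simp at h1 h2
    have hd : d = s * a := by
      rw [← hr2]
      have key : r ^ 9 * (d - r ^ 2 * a) * 64 = 0 := by linear_combination (-8 * r ^ 7) * h1
      have := (mul_eq_zero.mp ((mul_eq_zero.mp key).resolve_right (by norm_num))).resolve_left
        (pow_ne_zero 9 hrpos.ne')
      linarith
    have hc : c = -(s * b) := by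
      rw [← hr2]
      have key : r ^ 9 * (c + r ^ 2 * b) * 64 = 0 := by linear_combination (8 * r ^ 7) * h2
      have := (mul_eq_zero.mp ((mul_eq_zero.mp key).resolve_right (by norm_num))).resolve_left
        (pow_ne_zero 9 hrpos.ne')
      linarith
    rw [hd, hc, hs]
    constructor <;> (field_simp; ring)

lemma part2 (n s u v : ℝ) (h1p : 0 < 1 + n) (h1m : 0 < 1 - n)
    (hs : s = (1 - n) / (1 + n)) :
    ((Real.sqrt s * u : ℝ) : ℂ) + (((Real.sqrt s)⁻¹ * v : ℝ) : ℂ) * Complex.I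
      = (((u : ℂ) + (v : ℂ) * Complex.I) -
          (n : ℂ) * (starRingEnd ℂ) ((u : ℂ) + (v : ℂ) * Complex.I)) /
        ((Real.sqrt (1 - n ^ 2) : ℝ) : ℂ) := by
  have hspos : 0 < s := by rw [hs]; exact div_pos h1m h1p
  set r := Real.sqrt s with hrdef
  have hrpos : 0 < r := Real.sqrt_pos.mpr hspos
  have hr2 : r ^ 2 = s := Real.sq_sqrt hspos.le
  have ht : Real.sqrt (1 - n ^ 2) = r * (1 + n) := by
    have h : 1 - n ^ 2 = s * (1 + n) ^ 2 := by rw [hs]; field_simp; ring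
    rw [h, ← hr2, Real.sqrt_mul (sq_nonneg r), Real.sqrt_sq hrpos.le,
      Real.sqrt_sq h1p.le]
  have hrc : (r : ℂ) ^ 2 * (1 + (n : ℂ)) = 1 - (n : ℂ) := by
    have : r ^ 2 * (1 + n) = 1 - n := by rw [hr2, hs]; field_simp
    exact_mod_cast this
  have htne : ((Real.sqrt (1 - n ^ 2) : ℝ) : ℂ) ≠ 0 := by
    rw [ht]
    exact_mod_cast (mul_pos hrpos h1p).ne'
  rw [eq_div_iff htne, ht]
  have hrne : (r : ℂ) ≠ 0 := by exact_mod_cast hrpos.ne'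
  push_cast
  simp only [map_add, map_mul, Complex.conj_ofReal, Complex.conj_I]
  field_simp
  ring_nf
  linear_combination (↑u:ℂ) * hrc

theorem stmt_2 (Ω : Set ℂ) (hΩ : IsOpen Ω) (ν u v : ℂ → ℝ)
    (hν : ContDiffOn ℝ 1 ν Ω) (hν1 : ∀ z ∈ Ω, |ν z| < 1)
    (hu : ContDiffOn ℝ 1 u Ω) (hv : ContDiffOn ℝ 1 v Ω)
    (σ : ℂ → ℝ) (hσ : ∀ z, σ z = (1 - ν z) / (1 + ν z))
    (α f w : ℂ → ℂ)
    (hα : ∀ z, α z = wdzbar (fun ζ => (σ ζ : ℂ)) z / (2 * (σ z : ℂ)))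
    (hf : ∀ z, f z = (u z : ℂ) + (v z : ℂ) * Complex.I)
    (hw : ∀ z, w z = ((Real.sqrt (σ z) * u z : ℝ) : ℂ) +
      (((Real.sqrt (σ z))⁻¹ * v z : ℝ) : ℂ) * Complex.I)
    (z : ℂ) (hz : z ∈ Ω) :
    (wdzbar f z = (ν z : ℂ) * (starRingEnd ℂ) (wdz f z) ↔
      wdzbar w z = α z * (starRingEnd ℂ) (w z)) ∧
    w z = (f z - (ν z : ℂ) * (starRingEnd ℂ) (f z)) /
      ((Real.sqrt (1 - (ν z) ^ 2) : ℝ) : ℂ) := by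
  have hn := abs_lt.mp (hν1 z hz)
  have h1p : (0:ℝ) < 1 + ν z := by linarith [hn.1]
  have h1m : (0:ℝ) < 1 - ν z := by linarith [hn.2]
  have hspos : 0 < σ z := by rw [hσ]; exact div_pos h1m h1p
  have hrpos : 0 < Real.sqrt (σ z) := Real.sqrt_pos.mpr hspos
  have hνd : DifferentiableAt ℝ ν z := (hν.contDiffAt (hΩ.mem_nhds hz)).differentiableAt one_ne_zero
  have hud : DifferentiableAt ℝ u z := (hu.contDiffAt (hΩ.mem_nhds hz)).differentiableAt one_ne_zero
  have hvd : DifferentiableAt ℝ v z := (hv.contDiffAt (hΩ.mem_nhds hz)).differentiableAt one_ne_zero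
  have hσd : DifferentiableAt ℝ σ z := by
    rw [funext hσ]
    have hd1 : DifferentiableAt ℝ (fun ζ => 1 - ν ζ) z := (differentiableAt_const _).sub hνd
    have hd2 : DifferentiableAt ℝ (fun ζ => 1 + ν ζ) z := (differentiableAt_const _).add hνd
    simp only [div_eq_mul_inv]
    exact hd1.mul (hd2.inv h1p.ne')
  have hU := hud.hasFDerivAt
  have hV := hvd.hasFDerivAt
  have hS := hσd.hasFDerivAt
  -- complexified coordinate functions
  have hcu : HasFDerivAt (fun ζ => ((u ζ : ℝ) : ℂ)) (Complex.ofRealCLM.comp (fderiv ℝ u z)) z := by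
    simpa [Function.comp_def] using Complex.ofRealCLM.hasFDerivAt.comp z hU
  have hcv : HasFDerivAt (fun ζ => ((v ζ : ℝ) : ℂ)) (Complex.ofRealCLM.comp (fderiv ℝ v z)) z := by
    simpa [Function.comp_def] using Complex.ofRealCLM.hasFDerivAt.comp z hV
  have hcσ : HasFDerivAt (fun ζ => ((σ ζ : ℝ) : ℂ)) (Complex.ofRealCLM.comp (fderiv ℝ σ z)) z := by
    simpa [Function.comp_def] using Complex.ofRealCLM.hasFDerivAt.comp z hS
  have hFf : HasFDerivAt f (Complex.ofRealCLM.comp (fderiv ℝ u z)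
      + Complex.I • Complex.ofRealCLM.comp (fderiv ℝ v z)) z := by
    rw [funext hf]
    exact hcu.add (hcv.mul_const Complex.I)
  have hf1 : fderiv ℝ f z 1 = ((fderiv ℝ u z 1 : ℝ) : ℂ)
      + ((fderiv ℝ v z 1 : ℝ) : ℂ) * Complex.I := by
    rw [hFf.fderiv]
    simp [ContinuousLinearMap.add_apply, ContinuousLinearMap.smul_apply,
      ContinuousLinearMap.comp_apply, Complex.ofRealCLM_apply, smul_eq_mul, mul_comm]
  have hfI : fderiv ℝ f z Complex.I = ((fderiv ℝ u z Complex.I : ℝ) : ℂ)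
      + ((fderiv ℝ v z Complex.I : ℝ) : ℂ) * Complex.I := by
    rw [hFf.fderiv]
    simp [ContinuousLinearMap.add_apply, ContinuousLinearMap.smul_apply,
      ContinuousLinearMap.comp_apply, Complex.ofRealCLM_apply, smul_eq_mul, mul_comm]
  have hσ1 : fderiv ℝ (fun ζ => ((σ ζ : ℝ) : ℂ)) z 1 = ((fderiv ℝ σ z 1 : ℝ) : ℂ) := by
    rw [hcσ.fderiv]; simp
  have hσI : fderiv ℝ (fun ζ => ((σ ζ : ℝ) : ℂ)) z Complex.I
      = ((fderiv ℝ σ z Complex.I : ℝ) : ℂ) := by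
    rw [hcσ.fderiv]; simp
  -- w pieces
  have hsq : HasFDerivAt (fun ζ => Real.sqrt (σ ζ))
      ((1 / (2 * Real.sqrt (σ z))) • fderiv ℝ σ z) z := hS.sqrt hspos.ne'
  have hsqi : HasFDerivAt (fun ζ => (Real.sqrt (σ ζ))⁻¹)
      ((-(Real.sqrt (σ z) ^ 2)⁻¹) • ((1 / (2 * Real.sqrt (σ z))) • fderiv ℝ σ z)) z := by
    simpa [Function.comp_def] using (hasDerivAt_inv hrpos.ne').comp_hasFDerivAt z hsq
  have hp := hsq.mul hU
  have hq := hsqi.mul hV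
  have hcp : HasFDerivAt (fun ζ => ((Real.sqrt (σ ζ) * u ζ : ℝ) : ℂ))
      (Complex.ofRealCLM.comp (Real.sqrt (σ z) • fderiv ℝ u z
        + u z • ((1 / (2 * Real.sqrt (σ z))) • fderiv ℝ σ z))) z := by
    simpa [Function.comp_def] using Complex.ofRealCLM.hasFDerivAt.comp z hp
  have hcq : HasFDerivAt (fun ζ => (((Real.sqrt (σ ζ))⁻¹ * v ζ : ℝ) : ℂ))
      (Complex.ofRealCLM.comp ((Real.sqrt (σ z))⁻¹ • fderiv ℝ v z
        + v z • ((-(Real.sqrt (σ z) ^ 2)⁻¹) • ((1 / (2 * Real.sqrt (σ z))) • fderiv ℝ σ z)))) z := by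
    simpa [Function.comp_def] using Complex.ofRealCLM.hasFDerivAt.comp z hq
  have hFw : HasFDerivAt w
      (Complex.ofRealCLM.comp (Real.sqrt (σ z) • fderiv ℝ u z
        + u z • ((1 / (2 * Real.sqrt (σ z))) • fderiv ℝ σ z))
       + Complex.I • Complex.ofRealCLM.comp ((Real.sqrt (σ z))⁻¹ • fderiv ℝ v z
        + v z • ((-(Real.sqrt (σ z) ^ 2)⁻¹) • ((1 / (2 * Real.sqrt (σ z))) • fderiv ℝ σ z)))) z := by
    rw [funext hw]
    exact hcp.add (hcq.mul_const Complex.I)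
  have hw1 : fderiv ℝ w z 1 =
      ((Real.sqrt (σ z) * fderiv ℝ u z 1 + u z * (fderiv ℝ σ z 1 / (2 * Real.sqrt (σ z))) : ℝ) : ℂ)
      + ((fderiv ℝ v z 1 / Real.sqrt (σ z)
          - v z * (fderiv ℝ σ z 1 / (2 * Real.sqrt (σ z) ^ 3)) : ℝ) : ℂ) * Complex.I := by
    rw [hFw.fderiv]
    simp only [ContinuousLinearMap.add_apply, ContinuousLinearMap.smul_apply,
      ContinuousLinearMap.coe_smul', Pi.smul_apply, ContinuousLinearMap.comp_apply,
      Complex.ofRealCLM_apply, smul_eq_mul, Complex.real_smul]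
    push_cast
    ring
  have hwI : fderiv ℝ w z Complex.I =
      ((Real.sqrt (σ z) * fderiv ℝ u z Complex.I
          + u z * (fderiv ℝ σ z Complex.I / (2 * Real.sqrt (σ z))) : ℝ) : ℂ)
      + ((fderiv ℝ v z Complex.I / Real.sqrt (σ z)
          - v z * (fderiv ℝ σ z Complex.I / (2 * Real.sqrt (σ z) ^ 3)) : ℝ) : ℂ) * Complex.I := by
    rw [hFw.fderiv]
    simp only [ContinuousLinearMap.add_apply, ContinuousLinearMap.smul_apply,
      ContinuousLinearMap.coe_smul', Pi.smul_apply, ContinuousLinearMap.comp_apply,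
      Complex.ofRealCLM_apply, smul_eq_mul, Complex.real_smul]
    push_cast
    ring
  -- Wirtinger derivatives in real/imaginary form
  have hwbf : wdzbar f z = (((fderiv ℝ u z 1 - fderiv ℝ v z Complex.I) / 2 : ℝ) : ℂ)
      + (((fderiv ℝ v z 1 + fderiv ℝ u z Complex.I) / 2 : ℝ) : ℂ) * Complex.I := by
    rw [wdzbar, hf1, hfI]
    push_cast
    linear_combination ((fderiv ℝ v z Complex.I : ℝ) : ℂ) / 2 * Complex.I_sq
  have hwdf : wdz f z = (((fderiv ℝ u z 1 + fderiv ℝ v z Complex.I) / 2 : ℝ) : ℂ)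
      + (((fderiv ℝ v z 1 - fderiv ℝ u z Complex.I) / 2 : ℝ) : ℂ) * Complex.I := by
    rw [wdz, hf1, hfI]
    push_cast
    linear_combination -((fderiv ℝ v z Complex.I : ℝ) : ℂ) / 2 * Complex.I_sq
  have hwbw : wdzbar w z =
      (((Real.sqrt (σ z) * fderiv ℝ u z 1 + u z * (fderiv ℝ σ z 1 / (2 * Real.sqrt (σ z)))
          - (fderiv ℝ v z Complex.I / Real.sqrt (σ z)
          - v z * (fderiv ℝ σ z Complex.I / (2 * Real.sqrt (σ z) ^ 3)))) / 2 : ℝ) : ℂ)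
      + ((((fderiv ℝ v z 1 / Real.sqrt (σ z)
          - v z * (fderiv ℝ σ z 1 / (2 * Real.sqrt (σ z) ^ 3)))
          + (Real.sqrt (σ z) * fderiv ℝ u z Complex.I
          + u z * (fderiv ℝ σ z Complex.I / (2 * Real.sqrt (σ z))))) / 2 : ℝ) : ℂ)
        * Complex.I := by
    rw [wdzbar, hw1, hwI]
    push_cast
    linear_combination (((fderiv ℝ v z Complex.I : ℝ) : ℂ) / ((Real.sqrt (σ z) : ℝ) : ℂ)
      - ((v z : ℝ) : ℂ) * ((fderiv ℝ σ z Complex.I : ℝ) : ℂ)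
        / (2 * ((Real.sqrt (σ z) : ℝ) : ℂ) ^ 3)) / 2 * Complex.I_sq
  have hαz : α z = ((fderiv ℝ σ z 1 / (4 * σ z) : ℝ) : ℂ)
      + ((fderiv ℝ σ z Complex.I / (4 * σ z) : ℝ) : ℂ) * Complex.I := by
    rw [hα, wdzbar, hσ1, hσI]
    have hne : ((σ z : ℝ) : ℂ) ≠ 0 := Complex.ofReal_ne_zero.mpr hspos.ne'
    push_cast
    field_simp
    ring
  constructor
  · rw [hwbf, hwdf, mul_conj_form, ri_eq, hwbw, hαz, hw z, mul_form, ri_eq]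
    exact alg_iff (ν z) (σ z) (u z) (v z) _ _ _ _ _ _ (hσ z) h1p h1m
  · rw [hw z, hf z]
    exact part2 (ν z) (σ z) (u z) (v z) h1p h1m (hσ z)
end

section
/- Let α ∈ L^∞ of the open unit disk 𝔻, let r : ℂ → ℂ be measurable with |r| ≤ ‖α‖_∞ pointwise and r = 0 outside 𝔻, and define for z ∈ ℂ: s(z) = (1/(2πi)) ∬_𝔻 [ r(ζ)/(ζ−z) + z·conj(r(ζ))/(1−conj(ζ)z) ] dζ∧dζ̄. Then |s(z)| ≤ 4‖α‖_{L^∞(𝔻)} for all z ∈ ℂ. -/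
open MeasureTheory ENNReal Set Metric
open scoped Real

noncomputable section

theorem ofReal_norm_eq_coe_nnnorm {E : Type*} [SeminormedAddGroup E] (a : E) :
    ENNReal.ofReal ‖a‖ = (‖a‖₊ : ℝ≥0∞) := by
  rw [ofReal_norm, enorm_eq_nnnorm]

theorem aux_lintegral_polar (g : ℝ × ℝ → ℝ≥0∞) {s : Set (ℝ × ℝ)} (hs : MeasurableSet s)
    (hsub : s ⊆ polarCoord.target) :
    ∫⁻ x in polarCoord.symm '' s, g x
      = ∫⁻ p in s, ENNReal.ofReal p.1 * g (polarCoord.symm p) := by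
  set B : ℝ × ℝ → ℝ × ℝ →L[ℝ] ℝ × ℝ := fun p =>
    LinearMap.toContinuousLinearMap (Matrix.toLin (Module.Basis.finTwoProd ℝ) (Module.Basis.finTwoProd ℝ)
      !![Real.cos p.2, -p.1 * Real.sin p.2; Real.sin p.2, p.1 * Real.cos p.2])
  have A : ∀ p ∈ s, HasFDerivWithinAt polarCoord.symm (B p) s p := fun p _ =>
    (hasFDerivAt_polarCoord_symm p).hasFDerivWithinAt
  have B_det : ∀ p, (B p).det = p.1 := by
    intro p
    conv_rhs => rw [← one_mul p.1, ← Real.cos_sq_add_sin_sq p.2]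
    simp only [B, neg_mul, LinearMap.det_toContinuousLinearMap, LinearMap.det_toLin,
      Matrix.det_fin_two_of, sub_neg_eq_add]
    ring
  have hinj : Set.InjOn polarCoord.symm s :=
    (polarCoord.symm.injOn).mono (by simpa using hsub)
  rw [lintegral_image_eq_lintegral_abs_det_fderiv_mul volume hs A hinj g]
  refine setLIntegral_congr_fun hs (fun p hp => ?_)
  rw [B_det, abs_of_pos (hsub hp).1]

theorem aux_image_eq :
    Complex.polarCoord.symm '' (Ioo (0:ℝ) 1 ×ˢ Ioo (-π) π)
      = ball (0:ℂ) 1 ∩ Complex.slitPlane := by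
  have hsub : (Ioo (0:ℝ) 1 ×ˢ Ioo (-π) π) ⊆ Complex.polarCoord.target := by
    rw [Complex.polarCoord_target]
    exact Set.prod_mono_left Ioo_subset_Ioi_self
  rw [show (Complex.polarCoord.symm '' (Ioo (0:ℝ) 1 ×ˢ Ioo (-π) π)
      = Complex.polarCoord.source ∩ Complex.polarCoord ⁻¹' (Ioo (0:ℝ) 1 ×ˢ Ioo (-π) π)) from
    Complex.polarCoord.toPartialEquiv.symm_image_eq_source_inter_preimage hsub]
  rw [Complex.polarCoord_source]
  ext z
  simp only [Set.mem_inter_iff, Set.mem_preimage, Complex.polarCoord_apply, Set.mem_prod,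
    Set.mem_Ioo, mem_ball, Complex.dist_eq, sub_zero]
  constructor
  · rintro ⟨hz, ⟨_, h1⟩, _⟩
    exact ⟨h1, hz⟩
  · rintro ⟨h1, hz⟩
    have hz0 : z ≠ 0 := Complex.slitPlane_ne_zero hz
    have harg := Complex.arg_mem_Ioc z
    have hpi : z.arg ≠ π := (Complex.mem_slitPlane_iff_arg.mp hz).1
    exact ⟨hz, ⟨norm_pos_iff.mpr hz0, h1⟩, harg.1, lt_of_le_of_ne harg.2 hpi⟩

theorem aux_lintegral_ball (g : ℂ → ℝ≥0∞) :
    ∫⁻ z in ball (0:ℂ) 1, g z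
      = ∫⁻ p in Ioo (0:ℝ) 1 ×ˢ Ioo (-π) π,
          ENNReal.ofReal p.1 * g (Complex.polarCoord.symm p) := by
  have h0 : volume {z : ℂ | z.im = 0} = 0 := by
    have he : {z : ℂ | z.im = 0}
        = Complex.measurableEquivRealProd ⁻¹' (Set.univ ×ˢ ({0} : Set ℝ)) := by
      ext z; simp [Complex.measurableEquivRealProd_apply, eq_comm]
    rw [he, Complex.volume_preserving_equiv_real_prod.measure_preimage
      ((MeasurableSet.univ.prod (measurableSet_singleton (0:ℝ))).nullMeasurableSet),
      Measure.volume_eq_prod, Measure.prod_prod]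
    simp
  have hae : (ball (0:ℂ) 1 : Set ℂ) =ᵐ[volume]
      ((ball (0:ℂ) 1 ∩ Complex.slitPlane : Set ℂ)) := by
    rw [MeasureTheory.ae_eq_set]
    constructor
    · refine measure_mono_null (fun z hz => ?_) h0
      have := hz.2
      simp only [Set.mem_inter_iff, not_and, Set.mem_setOf_eq] at this ⊢
      by_contra him
      exact (this hz.1) (Complex.mem_slitPlane_iff.mpr (Or.inr him))
    · rw [Set.diff_eq_empty.mpr Set.inter_subset_left]
      exact measure_empty
  have hS : MeasurableSet (Ioo (0:ℝ) 1 ×ˢ Ioo (-π) π) :=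
    measurableSet_Ioo.prod measurableSet_Ioo
  have hsub : (Ioo (0:ℝ) 1 ×ˢ Ioo (-π) π) ⊆ polarCoord.target := by
    rw [polarCoord_target]
    exact Set.prod_mono_left Ioo_subset_Ioi_self
  have hcomp : ∀ p : ℝ × ℝ,
      Complex.polarCoord.symm p = Complex.measurableEquivRealProd.symm (polarCoord.symm p) := by
    intro p
    simp [Complex.polarCoord_symm_apply, Complex.measurableEquivRealProd_symm_apply,
      Complex.ext_iff, Complex.cos_ofReal_re, Complex.sin_ofReal_re]
  calc ∫⁻ z in ball (0:ℂ) 1, g z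
      = ∫⁻ z in ball (0:ℂ) 1 ∩ Complex.slitPlane, g z := setLIntegral_congr hae
    _ = ∫⁻ z in Complex.polarCoord.symm '' (Ioo (0:ℝ) 1 ×ˢ Ioo (-π) π), g z := by
        rw [aux_image_eq]
    _ = ∫⁻ z in Complex.measurableEquivRealProd.symm ''
          (polarCoord.symm '' (Ioo (0:ℝ) 1 ×ˢ Ioo (-π) π)), g z := by
        rw [← Set.image_comp]
        congr 1
    _ = ∫⁻ x in polarCoord.symm '' (Ioo (0:ℝ) 1 ×ˢ Ioo (-π) π),
          g (Complex.measurableEquivRealProd.symm x) := by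
        rw [(Complex.volume_preserving_equiv_real_prod.symm _).setLIntegral_comp_emb
          Complex.measurableEquivRealProd.symm.measurableEmbedding]
    _ = ∫⁻ p in Ioo (0:ℝ) 1 ×ˢ Ioo (-π) π,
          ENNReal.ofReal p.1 * g (Complex.measurableEquivRealProd.symm (polarCoord.symm p)) :=
        aux_lintegral_polar _ hS hsub
    _ = _ := by
        refine setLIntegral_congr_fun hS (fun p hp => ?_)
        rw [hcomp]

theorem aux_lintegral_inv_ball :
    ∫⁻ z in ball (0:ℂ) 1, ENNReal.ofReal ‖z‖⁻¹ = ENNReal.ofReal (2 * π) := by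
  rw [aux_lintegral_ball]
  have hS : MeasurableSet (Ioo (0:ℝ) 1 ×ˢ Ioo (-π) π) :=
    measurableSet_Ioo.prod measurableSet_Ioo
  have hpt : ∀ p ∈ Ioo (0:ℝ) 1 ×ˢ Ioo (-π) π,
      ENNReal.ofReal p.1 * ENNReal.ofReal ‖Complex.polarCoord.symm p‖⁻¹ = 1 := by
    rintro p ⟨hp1, _⟩
    have h1 : ‖Complex.polarCoord.symm p‖ = |p.1| := by
      rw [Complex.norm_polarCoord_symm]
    rw [h1, abs_of_pos hp1.1, ← ENNReal.ofReal_mul hp1.1.le,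
      mul_inv_cancel₀ hp1.1.ne', ENNReal.ofReal_one]
  rw [setLIntegral_congr_fun hS hpt, setLIntegral_one,
    Measure.volume_eq_prod, Measure.prod_prod, Real.volume_Ioo, Real.volume_Ioo,
    ← ENNReal.ofReal_mul (by norm_num)]
  norm_num
  ring_nf
  rw [ENNReal.ofReal_mul Real.pi_pos.le]
  simp

theorem aux_lintegral_inv_ball_center (a : ℂ) :
    ∫⁻ z in ball a 1, ENNReal.ofReal ‖z - a‖⁻¹ = ENNReal.ofReal (2 * π) := by
  have hmp : MeasurePreserving (fun z : ℂ => z + a) volume volume :=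
    measurePreserving_add_right volume a
  have hemb : MeasurableEmbedding (fun z : ℂ => z + a) :=
    (MeasurableEquiv.addRight a).measurableEmbedding
  have himg : (fun z : ℂ => z + a) '' ball (0:ℂ) 1 = ball a 1 := by
    ext z
    simp only [Set.mem_image, mem_ball, Complex.dist_eq]
    constructor
    · rintro ⟨w, hw, rfl⟩; simpa using hw
    · intro hz; exact ⟨z - a, by simpa using hz, by ring⟩
  rw [← himg, ← hmp.setLIntegral_comp_emb hemb (fun z => ENNReal.ofReal ‖z - a‖⁻¹) (ball 0 1)]
  simp only [add_sub_cancel_right]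
  exact aux_lintegral_inv_ball

theorem aux_lintegral_inv_le (a : ℂ) :
    ∫⁻ z in ball (0:ℂ) 1, ENNReal.ofReal ‖z - a‖⁻¹ ≤ ENNReal.ofReal (2 * π) := by
  set h : ℂ → ℝ≥0∞ := fun z => ENNReal.ofReal ‖z - a‖⁻¹ with hh
  set E : Set ℂ := ball (0:ℂ) 1
  set B : Set ℂ := ball a 1
  have hEm : MeasurableSet E := measurableSet_ball
  have hBm : MeasurableSet B := measurableSet_ball
  have hvol : volume E = volume B := by
    rw [Complex.volume_ball, Complex.volume_ball]
  have hEfin : volume (E ∩ B) ≠ ⊤ :=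
    (lt_of_le_of_lt (measure_mono Set.inter_subset_left) measure_ball_lt_top).ne
  have hdiffeq : volume (E \ B) = volume (B \ E) := by
    have h1 : volume (E \ B) + volume (E ∩ B) = volume E := measure_diff_add_inter E hBm
    have h2 : volume (B \ E) + volume (B ∩ E) = volume B := measure_diff_add_inter B hEm
    rw [Set.inter_comm] at h2
    have := h1.trans (hvol.trans h2.symm)
    exact (ENNReal.add_left_inj hEfin).mp this
  have hsplitE : ∫⁻ z in E, h z = (∫⁻ z in E ∩ B, h z) + ∫⁻ z in E \ B, h z := by
    rw [← lintegral_union (hEm.diff hBm)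
      (Set.disjoint_sdiff_right.mono_left Set.inter_subset_right),
      Set.inter_union_diff]
  have hsplitB : ∫⁻ z in B, h z = (∫⁻ z in E ∩ B, h z) + ∫⁻ z in B \ E, h z := by
    rw [← lintegral_union (hBm.diff hEm)
      (Set.disjoint_sdiff_right.mono_left Set.inter_subset_left),
      Set.inter_comm, Set.inter_union_diff]
  have hub : ∫⁻ z in E \ B, h z ≤ volume (E \ B) := by
    rw [← setLIntegral_one]
    refine setLIntegral_mono' (hEm.diff hBm) fun z hz => ?_
    have : (1:ℝ) ≤ ‖z - a‖ := by
      have := hz.2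
      simp only [B, mem_ball, Complex.dist_eq, not_lt] at this
      exact this
    rw [hh]
    calc ENNReal.ofReal ‖z - a‖⁻¹ ≤ ENNReal.ofReal 1 :=
          ENNReal.ofReal_le_ofReal (inv_le_one_of_one_le₀ this)
      _ = 1 := ENNReal.ofReal_one
  have hlb : volume (B \ E) ≤ ∫⁻ z in B \ E, h z := by
    rw [← setLIntegral_one]
    have hane : ∀ᵐ z ∂(volume.restrict (B \ E)), z ≠ a := by
      refine ae_restrict_of_ae ?_
      rw [ae_iff]
      simpa using measure_singleton (μ := (volume : Measure ℂ)) a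
    refine lintegral_mono_ae ?_
    filter_upwards [ae_restrict_mem (hBm.diff hEm), hane] with z hz hza
    have h1 : ‖z - a‖ < 1 := by
      have := hz.1
      simpa only [B, mem_ball, Complex.dist_eq] using this
    have h0 : 0 < ‖z - a‖ := by
      simp [sub_eq_zero, hza]
    rw [hh]
    calc (1:ℝ≥0∞) = ENNReal.ofReal 1 := ENNReal.ofReal_one.symm
      _ ≤ ENNReal.ofReal ‖z - a‖⁻¹ :=
          ENNReal.ofReal_le_ofReal ((one_le_inv₀ h0).mpr h1.le)
  calc ∫⁻ z in E, h z = (∫⁻ z in E ∩ B, h z) + ∫⁻ z in E \ B, h z := hsplitE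
    _ ≤ (∫⁻ z in E ∩ B, h z) + ∫⁻ z in B \ E, h z := by
        exact add_le_add le_rfl (hub.trans (hdiffeq.le.trans hlb))
    _ = ∫⁻ z in B, h z := hsplitB.symm
    _ = ENNReal.ofReal (2 * π) := aux_lintegral_inv_ball_center a

theorem aux_snd_bound (z ζ w : ℂ) :
    ‖z * (starRingEnd ℂ) w / (1 - (starRingEnd ℂ) ζ * z)‖
      ≤ ‖w‖ * ‖ζ - ((starRingEnd ℂ) z)⁻¹‖⁻¹ := by
  by_cases hz : z = 0
  · simp only [hz, zero_mul, zero_div, norm_zero]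
    positivity
  by_cases hd : 1 - (starRingEnd ℂ) ζ * z = 0
  · rw [hd, _root_.div_zero, norm_zero]
    positivity
  have hz' : (starRingEnd ℂ) z ≠ 0 := by simpa using hz
  have hkey : ‖ζ - ((starRingEnd ℂ) z)⁻¹‖ = ‖1 - (starRingEnd ℂ) ζ * z‖ / ‖z‖ := by
    have h1 : ζ - ((starRingEnd ℂ) z)⁻¹
        = (starRingEnd ℂ) (1 - (starRingEnd ℂ) ζ * z) / (-(starRingEnd ℂ) z) := by
      rw [map_sub, map_one, map_mul]
      simp only [Complex.conj_conj]
      rw [eq_div_iff (neg_ne_zero.mpr hz')]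
      linear_combination inv_mul_cancel₀ hz'
    rw [h1, norm_div, RCLike.norm_conj, norm_neg, RCLike.norm_conj]
  rw [norm_div, norm_mul, RCLike.norm_conj, hkey]
  have hD : (0:ℝ) < ‖1 - (starRingEnd ℂ) ζ * z‖ := norm_pos_iff.mpr hd
  have hnz : (0:ℝ) < ‖z‖ := norm_pos_iff.mpr hz
  rw [inv_div]
  rw [div_le_iff₀ hD]
  rw [mul_assoc, div_mul_cancel₀ _ hD.ne']
  exact (mul_comm ‖z‖ ‖w‖).le

theorem aux_pointwise (M : ℝ≥0∞) {w : ℂ} (hw : (‖w‖₊ : ℝ≥0∞) ≤ M) (z ζ : ℂ) :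
    (‖w / (ζ - z) + z * (starRingEnd ℂ) w / (1 - (starRingEnd ℂ) ζ * z)‖₊ : ℝ≥0∞)
      ≤ M * (ENNReal.ofReal ‖ζ - z‖⁻¹ + ENNReal.ofReal ‖ζ - ((starRingEnd ℂ) z)⁻¹‖⁻¹) := by
  have hwM : ENNReal.ofReal ‖w‖ ≤ M := by rwa [ofReal_norm_eq_coe_nnnorm]
  calc (‖w / (ζ - z) + z * (starRingEnd ℂ) w / (1 - (starRingEnd ℂ) ζ * z)‖₊ : ℝ≥0∞)
      = ENNReal.ofReal ‖w / (ζ - z) + z * (starRingEnd ℂ) w / (1 - (starRingEnd ℂ) ζ * z)‖ :=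
        (ofReal_norm_eq_coe_nnnorm _).symm
    _ ≤ ENNReal.ofReal (‖w / (ζ - z)‖
          + ‖z * (starRingEnd ℂ) w / (1 - (starRingEnd ℂ) ζ * z)‖) :=
        ENNReal.ofReal_le_ofReal (norm_add_le _ _)
    _ ≤ ENNReal.ofReal (‖w‖ * ‖ζ - z‖⁻¹ + ‖w‖ * ‖ζ - ((starRingEnd ℂ) z)⁻¹‖⁻¹) := by
        refine ENNReal.ofReal_le_ofReal (add_le_add ?_ (aux_snd_bound z ζ w))
        rw [norm_div, div_eq_mul_inv]
    _ = ENNReal.ofReal ‖w‖ * ENNReal.ofReal ‖ζ - z‖⁻¹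
          + ENNReal.ofReal ‖w‖ * ENNReal.ofReal ‖ζ - ((starRingEnd ℂ) z)⁻¹‖⁻¹ := by
        rw [ENNReal.ofReal_add (by positivity) (by positivity),
          ENNReal.ofReal_mul (norm_nonneg _), ENNReal.ofReal_mul (norm_nonneg _)]
    _ ≤ M * ENNReal.ofReal ‖ζ - z‖⁻¹ + M * ENNReal.ofReal ‖ζ - ((starRingEnd ℂ) z)⁻¹‖⁻¹ :=
        add_le_add (mul_le_mul_left hwM _) (mul_le_mul_left hwM _)
    _ = M * (ENNReal.ofReal ‖ζ - z‖⁻¹ + ENNReal.ofReal ‖ζ - ((starRingEnd ℂ) z)⁻¹‖⁻¹) :=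
        (mul_add _ _ _).symm

theorem stmt_5 (α r : ℂ → ℂ) (hmeas : Measurable r)
    (hr : ∀ ζ, (‖r ζ‖₊ : ℝ≥0∞) ≤
      eLpNormEssSup α (volume.restrict (Metric.ball (0:ℂ) 1)))
    (hr0 : ∀ ζ ∉ Metric.ball (0:ℂ) 1, r ζ = 0)
    (s : ℂ → ℂ)
    (hs : ∀ z, s z = (2 * (Real.pi : ℂ) * Complex.I)⁻¹ * ((-2) * Complex.I) *
      ∫ ζ in Metric.ball (0:ℂ) 1,
        (r ζ / (ζ - z) + z * (starRingEnd ℂ) (r ζ) / (1 - (starRingEnd ℂ) ζ * z))) :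
    ∀ z : ℂ, (‖s z‖₊ : ℝ≥0∞) ≤
      4 * eLpNormEssSup α (volume.restrict (Metric.ball (0:ℂ) 1)) := by
  intro z
  set M := eLpNormEssSup α (volume.restrict (Metric.ball (0:ℂ) 1)) with hM
  set a : ℂ := ((starRingEnd ℂ) z)⁻¹ with ha
  set F : ℂ → ℂ := fun ζ =>
    r ζ / (ζ - z) + z * (starRingEnd ℂ) (r ζ) / (1 - (starRingEnd ℂ) ζ * z) with hF
  have hcnorm : ‖(2 * (Real.pi : ℂ) * Complex.I)⁻¹ * ((-2) * Complex.I)‖ = π⁻¹ := by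
    rw [norm_mul, norm_inv, norm_mul, norm_mul, norm_mul, Complex.norm_I, Complex.norm_real,
      Real.norm_eq_abs, abs_of_pos Real.pi_pos]
    norm_num
    ring
  have hg1 : Measurable fun ζ : ℂ => ENNReal.ofReal ‖ζ - z‖⁻¹ :=
    ((continuous_id.sub continuous_const).norm.measurable).inv.ennreal_ofReal
  have hg2 : Measurable fun ζ : ℂ => ENNReal.ofReal ‖ζ - a‖⁻¹ :=
    ((continuous_id.sub continuous_const).norm.measurable).inv.ennreal_ofReal
  calc (‖s z‖₊ : ℝ≥0∞)
      = ENNReal.ofReal ‖s z‖ := (ofReal_norm_eq_coe_nnnorm _).symm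
    _ = ENNReal.ofReal (π⁻¹ * ‖∫ ζ in Metric.ball (0:ℂ) 1, F ζ‖) := by
        rw [hs z, norm_mul, hcnorm]
    _ = ENNReal.ofReal π⁻¹ * ENNReal.ofReal ‖∫ ζ in Metric.ball (0:ℂ) 1, F ζ‖ :=
        ENNReal.ofReal_mul (by positivity)
    _ ≤ ENNReal.ofReal π⁻¹ * ∫⁻ ζ in Metric.ball (0:ℂ) 1, (‖F ζ‖₊ : ℝ≥0∞) := by
        rw [ofReal_norm_eq_coe_nnnorm]
        exact mul_le_mul_right (by simpa only [enorm_eq_nnnorm] using enorm_integral_le_lintegral_enorm _) _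
    _ ≤ ENNReal.ofReal π⁻¹ * ∫⁻ ζ in Metric.ball (0:ℂ) 1,
          M * (ENNReal.ofReal ‖ζ - z‖⁻¹ + ENNReal.ofReal ‖ζ - a‖⁻¹) := by
        refine mul_le_mul_right (lintegral_mono fun ζ => ?_) _
        exact aux_pointwise M (hr ζ) z ζ
    _ = ENNReal.ofReal π⁻¹ * (M * ((∫⁻ ζ in Metric.ball (0:ℂ) 1, ENNReal.ofReal ‖ζ - z‖⁻¹)
          + ∫⁻ ζ in Metric.ball (0:ℂ) 1, ENNReal.ofReal ‖ζ - a‖⁻¹)) := by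
        rw [lintegral_const_mul M (f := fun ζ : ℂ => ENNReal.ofReal ‖ζ - z‖⁻¹ + ENNReal.ofReal ‖ζ - a‖⁻¹) (hg1.add hg2), lintegral_add_left hg1]
    _ ≤ ENNReal.ofReal π⁻¹ * (M * (ENNReal.ofReal (2 * π) + ENNReal.ofReal (2 * π))) := by
        exact mul_le_mul_right (mul_le_mul_right
          (add_le_add (aux_lintegral_inv_le z) (aux_lintegral_inv_le a)) _) _
    _ = 4 * M := by
        rw [← ENNReal.ofReal_add (by positivity) (by positivity), mul_comm (ENNReal.ofReal π⁻¹),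
          mul_assoc, ← ENNReal.ofReal_mul (by positivity)]
        have : (2 * π + 2 * π) * π⁻¹ = 4 := by
          field_simp
          ring
        rw [this, mul_comm]
        norm_num
end
end
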